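/- Let Σ be a finite alphabet with |Σ| = σ ≥ 2 and let k, ι be natural numbers with k > ι. Then there exists a word w over Σ with alph(w) = Σ, ι(w) = ι, and |w| = (σ − 1)·(k − ι)·(ι + 1) + ι, such that for every word w' over Σ with ι(w') = ι we have |ScatFact_k(w')| ≤ |ScatFact_k(w)|. -/

import Mathlib

open List

universe u
variable {α : Type u}

/-- `ScatFact k w` is the set of scattered factors (subsequences) of `w` of length exactly `k`. -/
def ScatFact (k : ℕ) (w : List α) : Set (List α) :=
  {v | v.length = k ∧ v.Sublist w}

/-- `w` is `k`-universal over the alphabet `S`: every word of length `k` over `S`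
is a scattered factor of `w`. -/
def IsKUniversal [DecidableEq α] (S : Finset α) (k : ℕ) (w : List α) : Prop :=
  ∀ v : List α, v.length = k → (∀ x ∈ v, x ∈ S) → v.Sublist w

/-- The universality index of `w` over the alphabet `S`: the largest `k` such that
`w` is `k`-universal over `S`. -/
noncomputable def univIdx [DecidableEq α] (S : Finset α) (w : List α) : ℕ :=
  sSup {k | IsKUniversal S k w}

/-- `IsArchFact S w inners modus rest` says that `w` has the arch factorization
`w = ar_1 ⋯ ar_n · rest` over the alphabet `S`, where the `i`-th arch is
`ar_i = inners[i] ++ [modus[i]]`: each arch contains every letter of `S`,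
the last letter of each arch occurs only once within the arch, and the
alphabet of the rest is a proper subset of `S`. -/
def IsArchFact [DecidableEq α] (S : Finset α) (w : List α)
    (inners : List (List α)) (modus : List α) (rest : List α) : Prop :=
  inners.length = modus.length ∧
  w = (List.zipWith (fun inn m => inn ++ [m]) inners modus).flatten ++ rest ∧
  (∀ p ∈ List.zip inners modus, ∀ x ∈ S, x ∈ p.1 ++ [p.2]) ∧
  (∀ p ∈ List.zip inners modus, p.2 ∉ p.1) ∧
  rest.toFinset ⊂ S

/-- `v` is perfect `k`-universal over `S`: `alph(v) = S`, the universality index of `v`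
over `S` is `k`, and the rest of its arch factorization over `S` is empty. -/
def IsPerfectUniv [DecidableEq α] (S : Finset α) (k : ℕ) (v : List α) : Prop :=
  v.toFinset = S ∧ univIdx S v = k ∧ ∃ inners modus, IsArchFact S v inners modus []

/-- `v` is minimal perfect `k`-universal over `S`. -/
def IsMinPerfectUniv [DecidableEq α] (S : Finset α) (k : ℕ) (v : List α) : Prop :=
  IsPerfectUniv S k v ∧ ∀ v' : List α, IsPerfectUniv S k v' → v.length ≤ v'.length

/-- `nextAlphPos w i s` (positions `1`-indexed): the least position `j` such that
`w[i+1..j]` contains exactly `s` distinct letters, or `none` (representing `-1`)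
if `w[i+1..|w|]` contains fewer than `s` distinct letters. -/
noncomputable def nextAlphPos [DecidableEq α] (w : List α) (i s : ℕ) : Option ℕ :=
  if (w.drop i).toFinset.card < s then none
  else some (sInf {j | ((w.drop i).take (j - i)).toFinset.card = s})

/-- The letter of `w` at (1-indexed) position `j`. -/
def letterAt [Inhabited α] (w : List α) (j : ℕ) : α := w.getD (j - 1) default

/-- The word over `Fin σ` with `ι` arches, whose first arch is `a_1 a_2 ⋯ a_σ`
and each later arch is the reverse of the previous one. -/
def wmin (σ ι : ℕ) : List (Fin σ) :=
  ((List.range ι).map (fun i =>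
    if i % 2 = 0 then List.finRange σ else (List.finRange σ).reverse)).flatten

section StmtSixAux
variable {α : Type u} [DecidableEq α]

private lemma aux_split_first {x : α} : ∀ {v : List α}, x ∈ v →
    ∃ s t, v = s ++ x :: t ∧ x ∉ s := by
  intro v hv
  induction v with
  | nil => cases hv
  | cons y v ih =>
    by_cases hy : y = x
    · exact ⟨[], v, by simp [hy], by simp⟩
    · rcases List.mem_cons.mp hv with h | h
      · exact absurd h.symm hy
      · obtain ⟨s, t, rfl, hs⟩ := ih h
        refine ⟨y :: s, t, rfl, ?_⟩
        simp only [List.mem_cons, not_or]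
        exact ⟨fun e => hy e.symm, hs⟩

private lemma aux_sub_rep {P : List α} : ∀ {u : List α}, (∀ y ∈ u, y ∈ P) →
    u <+ (List.replicate u.length P).flatten := by
  intro u
  induction u with
  | nil => intro _; simp
  | cons a u ih =>
    intro h
    obtain ⟨s, t, hst⟩ := List.append_of_mem (h a List.mem_cons_self)
    have h1 : u <+ (List.replicate u.length P).flatten :=
      ih (fun y hy => h y (List.mem_cons_of_mem a hy))
    have h2 : a :: u <+ a :: (t ++ (List.replicate u.length P).flatten) :=
      (h1.trans (List.sublist_append_right t _)).cons₂ a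
    simp only [List.length_cons, List.replicate_succ, List.flatten_cons]
    generalize (List.replicate u.length P).flatten = R at h1 h2 ⊢
    rw [hst, List.append_assoc, List.cons_append]
    exact h2.trans (List.sublist_append_right s _)

private lemma aux_rep_mono {P : List α} {m n : ℕ} (h : m ≤ n) :
    (List.replicate m P).flatten <+ (List.replicate n P).flatten := by
  obtain ⟨d, rfl⟩ := Nat.exists_eq_add_of_le h
  rw [List.replicate_add, List.flatten_append]
  exact List.sublist_append_left _ _

private lemma aux_embed {x : α} {P : List α} (hP : ∀ y : α, y ≠ x → y ∈ P) {c : ℕ}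
    (hc : 1 ≤ c) :
    ∀ (t : ℕ) (v : List α), v.count x ≤ t → v.length ≤ c + t →
      v <+ (List.replicate t ((List.replicate c P).flatten ++ [x])).flatten
            ++ (List.replicate c P).flatten := by
  intro t
  induction t with
  | zero =>
    intro v hcount hlen
    have hxv : x ∉ v := List.count_eq_zero.mp (Nat.le_zero.mp hcount)
    have h1 : v <+ (List.replicate c P).flatten :=
      (aux_sub_rep (fun y hy => hP y (fun e => hxv (e ▸ hy)))).trans
        (aux_rep_mono (by omega))
    simpa using h1
  | succ t ih =>
    intro v hcount hlen
    have hW : (List.replicate (t+1) ((List.replicate c P).flatten ++ [x])).flatten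
          ++ (List.replicate c P).flatten
        = (List.replicate c P).flatten
          ++ x :: ((List.replicate t ((List.replicate c P).flatten ++ [x])).flatten
            ++ (List.replicate c P).flatten) := by
      rw [List.replicate_succ, List.flatten_cons]
      simp [List.append_assoc]
    rw [hW]
    by_cases hxv : x ∈ v
    · obtain ⟨s, u, rfl, hxs⟩ := aux_split_first hxv
      have hsP : ∀ y ∈ s, y ∈ P := fun y hy => hP y (fun e => hxs (e ▸ hy))
      have hcs : s.count x = 0 := List.count_eq_zero.mpr hxs
      have hcv : (s ++ x :: u).count x = u.count x + 1 := by
        simp [List.count_append, hcs, List.count_cons_self]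
      have hlv : (s ++ x :: u).length = s.length + u.length + 1 := by
        rw [List.length_append, List.length_cons]; omega
      by_cases hsc : s.length ≤ c
      · have h1 : s <+ (List.replicate c P).flatten :=
          (aux_sub_rep hsP).trans (aux_rep_mono hsc)
        have h2 : u <+ (List.replicate t ((List.replicate c P).flatten ++ [x])).flatten
            ++ (List.replicate c P).flatten := ih u (by omega) (by omega)
        exact h1.append (h2.cons₂ x)
      · have h1 : s.take c <+ (List.replicate c P).flatten := by
          have hh := aux_sub_rep (u := s.take c)
            (fun y hy => hsP y (List.take_subset c s hy))
          exact hh.trans (aux_rep_mono (by rw [List.length_take]; omega))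
        have hdropc : (s.drop c).count x = 0 :=
          List.count_eq_zero.mpr (fun h => hxs (List.drop_subset c s h))
        have hucount : u.count x ≤ u.length := List.count_le_length
        have h2 : s.drop c ++ x :: u
            <+ (List.replicate t ((List.replicate c P).flatten ++ [x])).flatten
              ++ (List.replicate c P).flatten := by
          apply ih
          · rw [List.count_append, hdropc, List.count_cons_self]
            omega
          · rw [List.length_append, List.length_drop, List.length_cons]
            omega
        calc s ++ x :: u = s.take c ++ (s.drop c ++ x :: u) := by
              rw [← List.append_assoc, List.take_append_drop]
          _ <+ _ := h1.append (h2.trans (List.sublist_cons_self x _))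
    · by_cases hvc : v.length ≤ c
      · have h1 : v <+ (List.replicate c P).flatten :=
          (aux_sub_rep (fun y hy => hP y (fun e => hxv (e ▸ hy)))).trans
            (aux_rep_mono hvc)
        exact h1.trans (List.sublist_append_left _ _)
      · have h1 : v.take c <+ (List.replicate c P).flatten := by
          have hh := aux_sub_rep (u := v.take c)
            (fun y hy => hP y (fun e => hxv (e ▸ List.take_subset c v hy)))
          exact hh.trans (aux_rep_mono (by rw [List.length_take]; omega))
        have h2 : v.drop c <+ (List.replicate t ((List.replicate c P).flatten ++ [x])).flatten
            ++ (List.replicate c P).flatten := by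
          apply ih
          · have hz : (v.drop c).count x = 0 :=
              List.count_eq_zero.mpr (fun h => hxv (List.drop_subset c v h))
            omega
          · rw [List.length_drop]; omega
        calc v = v.take c ++ v.drop c := (List.take_append_drop c v).symm
          _ <+ _ := h1.append (h2.trans (List.sublist_cons_self x _))

end StmtSixAux


section StmtSixEnc
variable {α : Type u} [DecidableEq α]

private def encW (x : α) : List α → List α → List α
  | [], v => v
  | b :: zs, v =>
    match v with
    | [] => []
    | y :: v =>
      if y = x then b :: encW x zs v
      else (if y = b then x else y) :: encW x (b :: zs) v
termination_by z v => z.length + v.length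
decreasing_by all_goals (simp [List.length_cons]; try omega)

private lemma encW_chi_ne {x b y : α} (hy : y ≠ x) : (if y = b then x else y) ≠ b := by
  by_cases h : y = b
  · rw [if_pos h]; intro e; exact hy (h.trans e.symm)
  · rwa [if_neg h]

private lemma encW_chi_inj {x b y y' : α} (hy : y ≠ x) (hy' : y' ≠ x)
    (h : (if y = b then x else y) = (if y' = b then x else y')) : y = y' := by
  by_cases h1 : y = b <;> by_cases h2 : y' = b
  · exact h1.trans h2.symm
  · rw [if_pos h1, if_neg h2] at h; exact absurd h.symm hy'
  · rw [if_neg h1, if_pos h2] at h; exact absurd h hy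
  · rwa [if_neg h1, if_neg h2] at h

private lemma encW_length {x : α} : ∀ (v z : List α), z.length ≤ v.count x →
    (encW x z v).length = v.length := by
  intro v
  induction v with
  | nil =>
    intro z h
    cases z with
    | nil => simp [encW]
    | cons b zs => simp at h
  | cons y v ih =>
    intro z h
    cases z with
    | nil => simp [encW]
    | cons b zs =>
      by_cases hy : y = x
      · rw [hy, List.count_cons_self, List.length_cons] at h
        have h' : zs.length ≤ v.count x := by omega
        simp [encW, if_pos hy, ih zs h']
      · rw [List.count_cons_of_ne hy] at h
        simp [encW, if_neg hy, ih (b :: zs) h]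

private lemma encW_sublist {x : α} : ∀ (v z : List α), z.length ≤ v.count x →
    z <+ encW x z v := by
  intro v
  induction v with
  | nil =>
    intro z h
    cases z with
    | nil => exact List.nil_sublist _
    | cons b zs => simp at h
  | cons y v ih =>
    intro z h
    cases z with
    | nil => exact List.nil_sublist _
    | cons b zs =>
      by_cases hy : y = x
      · rw [hy, List.count_cons_self, List.length_cons] at h
        have h' : zs.length ≤ v.count x := by omega
        simpa [encW, if_pos hy] using (ih zs h').cons₂ b
      · rw [List.count_cons_of_ne hy] at h
        simpa [encW, if_neg hy] using (ih (b :: zs) h).cons _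

private lemma encW_inj {x : α} : ∀ (v z v' : List α), z.length ≤ v.count x →
    z.length ≤ v'.count x → encW x z v = encW x z v' → v = v' := by
  intro v
  induction v with
  | nil =>
    intro z v' h h' he
    cases z with
    | nil => simpa [encW] using he
    | cons b zs => simp at h
  | cons y v ih =>
    intro z v' h h' he
    cases z with
    | nil => simpa [encW] using he
    | cons b zs =>
      cases v' with
      | nil => simp at h'
      | cons y' v'' =>
        by_cases hy : y = x <;> by_cases hy' : y' = x
        · simp only [encW, if_pos hy, if_pos hy'] at he
          injection he with he1 he2
          rw [hy, List.count_cons_self, List.length_cons] at h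
          rw [hy', List.count_cons_self, List.length_cons] at h'
          rw [hy, hy', ih zs v'' (by omega) (by omega) he2]
        · simp only [encW, if_pos hy, if_neg hy'] at he
          injection he with he1 he2
          exact absurd he1.symm (encW_chi_ne hy')
        · simp only [encW, if_pos hy', if_neg hy] at he
          injection he with he1 he2
          exact absurd he1 (encW_chi_ne hy)
        · simp only [encW, if_neg hy, if_neg hy'] at he
          injection he with he1 he2
          rw [List.count_cons_of_ne hy] at h
          rw [List.count_cons_of_ne hy'] at h'
          rw [encW_chi_inj hy hy' he1, ih (b :: zs) v'' h h' he2]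

end StmtSixEnc


theorem stmt6 {α : Type u} [Fintype α] [DecidableEq α]
    (hsigma : 2 ≤ Fintype.card α) (k iota : ℕ) (hiota : 1 ≤ iota) (hk : iota < k) :
    ∃ w : List α, (∀ a : α, a ∈ w) ∧ univIdx Finset.univ w = iota ∧
      w.length = (Fintype.card α - 1) * (k - iota) * (iota + 1) + iota ∧
      ∀ w' : List α, univIdx Finset.univ w' = iota →
        (ScatFact k w').ncard ≤ (ScatFact k w).ncard := by
  classical
  have hne : Nonempty α := Fintype.card_pos_iff.mp (by omega)
  obtain ⟨x⟩ := hne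
  set σ := Fintype.card α with hσ
  set c := k - iota with hcdef
  have hc : 1 ≤ c := by omega
  set P := ((Finset.univ : Finset α).erase x).toList with hPdef
  have hPmem : ∀ y : α, y ≠ x → y ∈ P := by
    intro y hy
    rw [hPdef, Finset.mem_toList, Finset.mem_erase]
    exact ⟨hy, Finset.mem_univ y⟩
  have hPx : x ∉ P := by
    rw [hPdef, Finset.mem_toList, Finset.mem_erase]
    simp
  have hPlen : P.length = σ - 1 := by
    rw [hPdef, Finset.length_toList, Finset.card_erase_of_mem (Finset.mem_univ x),
      Finset.card_univ]
  have hClen : ((List.replicate c P).flatten).length = c * (σ - 1) := by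
    rw [List.length_flatten, List.map_replicate, List.sum_replicate, smul_eq_mul, hPlen]
  have hCx : x ∉ (List.replicate c P).flatten := by
    intro hx
    rcases List.mem_flatten.mp hx with ⟨l, hl, hxl⟩
    rw [List.mem_replicate] at hl
    exact hPx (hl.2 ▸ hxl)
  have hCxc : ((List.replicate c P).flatten).count x = 0 := List.count_eq_zero.mpr hCx
  set W := (List.replicate iota ((List.replicate c P).flatten ++ [x])).flatten
      ++ (List.replicate c P).flatten with hWdef
  have hflatcount : ∀ n : ℕ,
      ((List.replicate n ((List.replicate c P).flatten ++ [x])).flatten).count x = n := by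
    intro n
    induction n with
    | zero => simp
    | succ n ihn =>
      rw [List.replicate_succ, List.flatten_cons, List.count_append, List.count_append,
        ihn, hCxc]
      simp
      omega
  have hWcount : W.count x = iota := by
    rw [hWdef, List.count_append, hflatcount, hCxc]
    omega
  have hflatlen : ∀ n : ℕ,
      ((List.replicate n ((List.replicate c P).flatten ++ [x])).flatten).length
        = n * (c * (σ - 1) + 1) := by
    intro n
    induction n with
    | zero => simp
    | succ n ihn =>
      rw [List.replicate_succ, List.flatten_cons, List.length_append, ihn,
        List.length_append, hClen, List.length_cons, List.length_nil]
      ring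
  have hWlen : W.length = (σ - 1) * c * (iota + 1) + iota := by
    rw [hWdef, List.length_append, hflatlen, hClen]
    ring
  have hembed : ∀ (t : ℕ) (v : List α), v.count x ≤ t → v.length ≤ c + t →
      v <+ (List.replicate t ((List.replicate c P).flatten ++ [x])).flatten
        ++ (List.replicate c P).flatten := aux_embed hPmem hc
  have hUnivIota : IsKUniversal (Finset.univ : Finset α) iota W := by
    intro v hvlen _
    rw [hWdef]
    exact hembed iota v ((List.count_le_length).trans (le_of_eq hvlen)) (by omega)
  have hupper : ∀ n, IsKUniversal (Finset.univ : Finset α) n W → n ≤ iota := by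
    intro n hn
    have hs := hn (List.replicate n x) (List.length_replicate)
      (fun y _ => Finset.mem_univ y)
    have h2 := hs.count_le x
    rw [List.count_replicate_self, hWcount] at h2
    exact h2
  have hWidx : univIdx (Finset.univ : Finset α) W = iota := by
    apply _root_.le_antisymm
    · exact csSup_le ⟨iota, hUnivIota⟩ (fun n hn => hupper n hn)
    · exact le_csSup ⟨iota, fun n hn => hupper n hn⟩ hUnivIota
  have hScatW : ∀ v : List α, v.length = k → v.count x ≤ iota → v ∈ ScatFact k W := by
    intro v h1 h2
    refine ⟨h1, ?_⟩
    rw [hWdef]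
    exact hembed iota v h2 (by omega)
  refine ⟨W, ?_, hWidx, ?_, ?_⟩
  · intro a
    rcases eq_or_ne a x with rfl | ha
    · rw [hWdef]
      refine List.mem_append.mpr (Or.inl ?_)
      exact List.mem_flatten.mpr ⟨(List.replicate c P).flatten ++ [a],
        List.mem_replicate.mpr ⟨by omega, rfl⟩, by simp⟩
    · rw [hWdef]
      refine List.mem_append.mpr (Or.inr ?_)
      exact List.mem_flatten.mpr ⟨P, List.mem_replicate.mpr ⟨by omega, rfl⟩, hPmem a ha⟩
  · rw [hWlen]
  · intro w' hw'
    have hbdd : BddAbove {n | IsKUniversal (Finset.univ : Finset α) n w'} := by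
      refine ⟨w'.length, fun n hn => ?_⟩
      have hl := (hn (List.replicate n x) (List.length_replicate)
        (fun y _ => Finset.mem_univ y)).length_le
      rwa [List.length_replicate] at hl
    have hnotuniv : ¬ IsKUniversal (Finset.univ : Finset α) (iota + 1) w' := by
      intro h
      have hle := le_csSup hbdd h
      have hidx : univIdx (Finset.univ : Finset α) w' = iota := hw'
      rw [univIdx] at hidx
      omega
    have hex : ∃ z : List α, z.length = iota + 1 ∧ ¬ z.Sublist w' := by
      by_contra hcon
      push_neg at hcon
      exact hnotuniv (fun v hv _ => hcon v hv)
    obtain ⟨z, hzlen, hzns⟩ := hex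
    set Y := {v : List α | v.length = k} with hYdef
    have hYfin : Y.Finite := List.finite_length_eq α k
    have hAY : ScatFact k w' ⊆ Y := fun v hv => hv.1
    have hBY : ScatFact k W ⊆ Y := fun v hv => hv.1
    have hcnt : ∀ v ∈ Y \ ScatFact k W, iota + 1 ≤ v.count x := by
      intro v hv
      obtain ⟨hvY, hvB⟩ := hv
      by_contra hcontra
      exact hvB (hScatW v hvY (by omega))
    have hmaps : ∀ v ∈ Y \ ScatFact k W, encW x z v ∈ Y \ ScatFact k w' := by
      intro v hv
      have hvY : v.length = k := hv.1
      have hzc : z.length ≤ v.count x := by rw [hzlen]; exact hcnt v hv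
      constructor
      · show (encW x z v).length = k
        rw [encW_length v z hzc, hvY]
      · intro hmem
        exact hzns ((encW_sublist v z hzc).trans hmem.2)
    have hinj : Set.InjOn (encW x z) (Y \ ScatFact k W) := by
      intro v hv v' hv' he
      refine encW_inj v z v' ?_ ?_ he
      · rw [hzlen]; exact hcnt v hv
      · rw [hzlen]; exact hcnt v' hv'
    have h1 : (Y \ ScatFact k W).ncard ≤ (Y \ ScatFact k w').ncard := by
      rw [← Set.ncard_image_of_injOn hinj]
      refine Set.ncard_le_ncard ?_ (hYfin.diff)
      rintro s ⟨v, hv, rfl⟩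
      exact hmaps v hv
    have h2 := Set.ncard_diff_add_ncard_of_subset hAY hYfin
    have h3 := Set.ncard_diff_add_ncard_of_subset hBY hYfin
    omega
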